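/- arXiv:2510.02446 — 2 statements merged into one kernel-verified Lean document; each statement's English description precedes it below -/
import Mathlib

section
/- For independent G ~ Gamma(α,1) and E ~ Exp(1) with α > 0, the expectation E[(G − E)·1_{G > E}] equals α − (1 − 2^(-α)). -/
open MeasureTheory ProbabilityTheory Real Set
open scoped ENNReal NNReal

namespace GammaSubExpAux

lemma integrable_gammaPDFReal {a r : ℝ} (ha : 0 < a) (hr : 0 < r) :
    Integrable (gammaPDFReal a r) := by
  refine ⟨(measurable_gammaPDFReal a r).aestronglyMeasurable, ?_⟩
  rw [hasFiniteIntegral_iff_ofReal (ae_of_all _ (gammaPDFReal_nonneg ha hr))]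
  have : ∫⁻ x, ENNReal.ofReal (gammaPDFReal a r x) = 1 := lintegral_gammaPDF_eq_one ha hr
  simp [this]

lemma integral_gammaPDFReal_eq_one {a r : ℝ} (ha : 0 < a) (hr : 0 < r) :
    ∫ x, gammaPDFReal a r x = 1 := by
  rw [integral_eq_lintegral_of_nonneg_ae (ae_of_all _ (gammaPDFReal_nonneg ha hr))
    (measurable_gammaPDFReal a r).aestronglyMeasurable]
  have : ∫⁻ x, ENNReal.ofReal (gammaPDFReal a r x) = 1 := lintegral_gammaPDF_eq_one ha hr
  simp [this]

lemma gammaPDF_eq_coe_toNNReal (a r : ℝ) :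
    gammaPDF a r = fun x => ((Real.toNNReal (gammaPDFReal a r x)) : ℝ≥0∞) := by
  funext x; rw [gammaPDF, ENNReal.ofReal]

lemma integral_gammaMeasure {a r : ℝ} (ha : 0 < a) (hr : 0 < r) (g : ℝ → ℝ) :
    ∫ x, g x ∂(gammaMeasure a r) = ∫ x, gammaPDFReal a r x * g x := by
  rw [gammaMeasure, gammaPDF_eq_coe_toNNReal,
    integral_withDensity_eq_integral_smul ((measurable_gammaPDFReal a r).real_toNNReal) g]
  congr 1; funext x
  rw [NNReal.smul_def, smul_eq_mul, Real.coe_toNNReal _ (gammaPDFReal_nonneg ha hr x)]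

lemma integrable_gammaMeasure_iff {a r : ℝ} (ha : 0 < a) (hr : 0 < r) (g : ℝ → ℝ) :
    Integrable g (gammaMeasure a r) ↔ Integrable (fun x => g x * gammaPDFReal a r x) := by
  have hpdf : gammaPDF a r = fun x => ENNReal.ofReal (gammaPDFReal a r x) := rfl
  rw [gammaMeasure, hpdf, integrable_withDensity_iff ((measurable_gammaPDFReal a r).ennreal_ofReal)
    (ae_of_all _ fun x => ENNReal.ofReal_lt_top)]
  refine integrable_congr (ae_of_all _ fun x => ?_)
  simp only [ENNReal.toReal_ofReal (gammaPDFReal_nonneg ha hr x)]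

lemma mul_pdf_one (α : ℝ) (hα : 0 < α) :
    (fun x => x * gammaPDFReal α 1 x) = fun x => α * gammaPDFReal (α + 1) 1 x := by
  funext x
  unfold gammaPDFReal
  simp only [one_rpow, add_sub_cancel_right, one_mul]
  split_ifs with h
  · rcases eq_or_lt_of_le h with rfl | hx
    · rw [Real.zero_rpow hα.ne', Real.Gamma_add_one hα.ne']
      rcases eq_or_ne α 1 with rfl | h1
      · norm_num
      · rw [Real.zero_rpow (by intro hc; apply h1; linarith)]
        ring
    · rw [Real.Gamma_add_one hα.ne']
      have : x ^ α = x ^ (α - 1) * x := by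
        rw [← Real.rpow_add_one hx.ne', sub_add_cancel]
      rw [this]
      field_simp
  · ring

lemma mul_pdf_two (α : ℝ) (hα : 0 < α) :
    (fun x => Real.exp (-x) * gammaPDFReal α 1 x)
      = fun x => (2 : ℝ) ^ (-α) * gammaPDFReal α 2 x := by
  funext x
  unfold gammaPDFReal
  simp only [one_rpow]
  split_ifs with h
  · have h2 : (2 : ℝ) ^ (-α) * (2 : ℝ) ^ α = 1 := by
      rw [← Real.rpow_add two_pos]; simp
    have he : Real.exp (-x) * Real.exp (-(1 * x)) = Real.exp (-(2 * x)) := by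
      rw [← Real.exp_add]; ring_nf
    calc Real.exp (-x) * (1 / Real.Gamma α * x ^ (α - 1) * Real.exp (-(1 * x)))
        = (1 / Real.Gamma α * x ^ (α - 1)) * (Real.exp (-x) * Real.exp (-(1 * x))) := by ring
      _ = (2:ℝ) ^ (-α) * ((2:ℝ) ^ α / Real.Gamma α * x ^ (α - 1) * Real.exp (-(2 * x))) := by
          rw [he, show (2:ℝ) ^ (-α) * ((2:ℝ) ^ α / Real.Gamma α * x ^ (α - 1)
            * Real.exp (-(2 * x))) = ((2:ℝ) ^ (-α) * (2:ℝ) ^ α)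
            * (1 / Real.Gamma α * x ^ (α - 1) * Real.exp (-(2 * x))) from by ring, h2]
          ring
  · ring

lemma inner_integral {x : ℝ} (hx : 0 < x) :
    ∫ y, gammaPDFReal 1 1 y * (if y < x then x - y else 0)
      = x - 1 + Real.exp (-x) := by
  have hcongr : (fun y => gammaPDFReal 1 1 y * (if y < x then x - y else 0))
      = Set.indicator (Ico 0 x) (fun y => Real.exp (-y) * (x - y)) := by
    funext y
    unfold gammaPDFReal
    by_cases h0 : 0 ≤ y <;> by_cases h1 : y < x <;>
      simp [Set.indicator, h0, h1, Real.Gamma_one, Real.rpow_zero]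
  rw [hcongr, integral_indicator measurableSet_Ico, integral_Ico_eq_integral_Ioo,
    ← integral_Ioc_eq_integral_Ioo, ← intervalIntegral.integral_of_le hx.le]
  have key : ∀ y ∈ Set.uIcc 0 x,
      HasDerivAt (fun y => (y + 1 - x) * Real.exp (-y)) (Real.exp (-y) * (x - y)) y := by
    intro y _
    have h1 : HasDerivAt (fun y : ℝ => y + 1 - x) 1 y :=
      ((hasDerivAt_id y).add_const 1).sub_const x
    have h2 : HasDerivAt (fun y : ℝ => Real.exp (-y)) (-Real.exp (-y)) y := by
      simpa using (hasDerivAt_neg y).exp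
    have : HasDerivAt (fun y => (y + 1 - x) * Real.exp (-y))
        (1 * Real.exp (-y) + (y + 1 - x) * -Real.exp (-y)) y := h1.mul h2
    convert this using 1
    ring
  have hcont : Continuous fun y : ℝ => Real.exp (-y) * (x - y) := by fun_prop
  rw [intervalIntegral.integral_eq_sub_of_hasDerivAt key (hcont.intervalIntegrable 0 x)]
  simp [Real.exp_zero]
  ring

end GammaSubExpAux

open GammaSubExpAux

/-- For independent `G ~ Gamma(α,1)` and `E ~ Exp(1)` with `α > 0`,
`E[(G − E)·1_{G > E}] = α − (1 − 2^(-α))`. -/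
theorem gamma_sub_exp_pos_part_expectation {Ω : Type*} [MeasurableSpace Ω]
    (μ : Measure Ω) [IsProbabilityMeasure μ] (α : ℝ) (hα : 0 < α) (G E : Ω → ℝ)
    (hG : Measurable G) (hE : Measurable E)
    (hGlaw : μ.map G = gammaMeasure α 1) (hElaw : μ.map E = expMeasure 1)
    (hInd : IndepFun G E μ) :
    ∫ ω in {ω | E ω < G ω}, (G ω - E ω) ∂μ = α - (1 - (2 : ℝ) ^ (-α)) := by
  haveI h1 : IsProbabilityMeasure (gammaMeasure α 1) := isProbabilityMeasure_gammaMeasure hα one_pos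
  haveI h2 : IsProbabilityMeasure (gammaMeasure 1 1) := isProbabilityMeasure_gammaMeasure one_pos one_pos
  set ν : Measure (ℝ × ℝ) := (gammaMeasure α 1).prod (gammaMeasure 1 1) with hν
  set f : ℝ × ℝ → ℝ := fun p => if p.2 < p.1 then p.1 - p.2 else 0 with hfdef
  have hfmeas : Measurable f :=
    Measurable.ite (measurableSet_lt measurable_snd measurable_fst)
      (measurable_fst.sub measurable_snd) measurable_const
  have hmap : μ.map (fun ω => (G ω, E ω)) = ν := by
    rw [(indepFun_iff_map_prod_eq_prod_map_map hG.aemeasurable hE.aemeasurable).mp hInd,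
      hGlaw, hElaw]
    rfl
  have hset : MeasurableSet {ω | E ω < G ω} := measurableSet_lt hE hG
  have step1 : ∫ ω in {ω | E ω < G ω}, (G ω - E ω) ∂μ = ∫ ω, f (G ω, E ω) ∂μ := by
    rw [← integral_indicator hset]
    refine integral_congr_ae (ae_of_all _ fun ω => ?_)
    by_cases h : E ω < G ω <;> simp [Set.indicator, h, hfdef]
  have step2 : ∫ ω, f (G ω, E ω) ∂μ = ∫ p, f p ∂ν := by
    rw [← hmap, integral_map (hG.prodMk hE).aemeasurable hfmeas.aestronglyMeasurable]
  -- integrability of f over the product measure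
  have hid1 : Integrable (fun x : ℝ => x) (gammaMeasure α 1) := by
    rw [integrable_gammaMeasure_iff hα one_pos, mul_pdf_one α hα]
    exact (integrable_gammaPDFReal (by linarith) one_pos).const_mul α
  have hid2 : Integrable (fun x : ℝ => x) (gammaMeasure 1 1) := by
    rw [integrable_gammaMeasure_iff one_pos one_pos, mul_pdf_one 1 one_pos]
    exact (integrable_gammaPDFReal (by norm_num) one_pos).const_mul 1
  have hmfst : Measure.map Prod.fst ν = gammaMeasure α 1 := by
    simp [hν, Measure.map_fst_prod]
  have hmsnd : Measure.map Prod.snd ν = gammaMeasure 1 1 := by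
    simp [hν, Measure.map_snd_prod]
  have hfst : Integrable (fun p : ℝ × ℝ => p.1) ν := by
    have : Integrable (id : ℝ → ℝ) (Measure.map Prod.fst ν) := by rw [hmfst]; exact hid1
    exact (integrable_map_measure aestronglyMeasurable_id
      measurable_fst.aemeasurable).mp this
  have hsnd : Integrable (fun p : ℝ × ℝ => p.2) ν := by
    have : Integrable (id : ℝ → ℝ) (Measure.map Prod.snd ν) := by rw [hmsnd]; exact hid2
    exact (integrable_map_measure aestronglyMeasurable_id
      measurable_snd.aemeasurable).mp this
  have hfint : Integrable f ν := by
    refine Integrable.mono (hfst.abs.add hsnd.abs) hfmeas.aestronglyMeasurable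
      (ae_of_all _ fun p => ?_)
    simp only [hfdef, Real.norm_eq_abs, Pi.add_apply]
    have hnn : (0:ℝ) ≤ |p.1| + |p.2| := by positivity
    rw [abs_of_nonneg hnn]
    split_ifs with h
    · exact (abs_sub p.1 p.2)
    · simpa using hnn
  have step3 : ∫ p, f p ∂ν = ∫ x, ∫ y, f (x, y) ∂(gammaMeasure 1 1) ∂(gammaMeasure α 1) :=
    integral_prod f hfint
  have step4 : ∫ x, ∫ y, f (x, y) ∂(gammaMeasure 1 1) ∂(gammaMeasure α 1)
      = ∫ x, gammaPDFReal α 1 x * ∫ y, gammaPDFReal 1 1 y * f (x, y) := by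
    rw [integral_gammaMeasure hα one_pos]
    refine integral_congr_ae (ae_of_all _ fun x => ?_)
    dsimp only
    rw [integral_gammaMeasure one_pos one_pos]
  have step5 : ∫ x, gammaPDFReal α 1 x * ∫ y, gammaPDFReal 1 1 y * f (x, y)
      = ∫ x, gammaPDFReal α 1 x * (x - 1 + Real.exp (-x)) := by
    refine integral_congr_ae ?_
    have hne : ∀ᵐ x : ℝ, x ≠ 0 := by
      rw [ae_iff]
      simp only [ne_eq, not_not, setOf_eq_eq_singleton]
      exact measure_singleton 0
    filter_upwards [hne] with x hx
    rcases lt_or_gt_of_ne hx with hneg | hpos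
    · have hp : gammaPDFReal α 1 x = 0 := by
        unfold gammaPDFReal; rw [if_neg (not_le.mpr hneg)]
      simp [hp]
    · have : ∫ y, gammaPDFReal 1 1 y * f (x, y)
          = ∫ y, gammaPDFReal 1 1 y * (if y < x then x - y else 0) := by
        simp only [hfdef]
      rw [this, inner_integral hpos]
  have hinteg1 : Integrable (fun x => x * gammaPDFReal α 1 x) := by
    rw [mul_pdf_one α hα]
    exact (integrable_gammaPDFReal (by linarith) one_pos).const_mul α
  have hinteg2 : Integrable (gammaPDFReal α 1) := integrable_gammaPDFReal hα one_pos
  have hinteg3 : Integrable (fun x => Real.exp (-x) * gammaPDFReal α 1 x) := by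
    rw [mul_pdf_two α hα]
    exact (integrable_gammaPDFReal hα two_pos).const_mul _
  have expand : (fun x => gammaPDFReal α 1 x * (x - 1 + Real.exp (-x)))
      = fun x => (x * gammaPDFReal α 1 x - gammaPDFReal α 1 x)
        + Real.exp (-x) * gammaPDFReal α 1 x := by
    funext x; ring
  have hsub : Integrable (fun x => x * gammaPDFReal α 1 x - gammaPDFReal α 1 x) :=
    hinteg1.sub hinteg2
  rw [step1, step2, step3, step4, step5, expand,
    integral_add hsub hinteg3, integral_sub hinteg1 hinteg2,
    mul_pdf_one α hα, mul_pdf_two α hα, integral_const_mul, integral_const_mul,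
    integral_gammaPDFReal_eq_one (by linarith : (0:ℝ) < α + 1) one_pos,
    integral_gammaPDFReal_eq_one hα one_pos, integral_gammaPDFReal_eq_one hα two_pos]
  ring
end

section
/- Let E ~ Exp(1) and G ~ Gamma(α,1) be independent with α > 0, and let Z = (1 + N)·1_{G > E} where, conditional on (G, E), N is Poisson with mean (G − E)⁺. Then E[Z] = α. -/
open MeasureTheory ProbabilityTheory Real
open MeasureTheory ProbabilityTheory Real
open scoped ENNReal

lemma sum_exp (m : ℝ) : ∑' k : ℕ, m ^ k / k.factorial = Real.exp m := by
  rw [Real.exp_eq_exp_ℝ, NormedSpace.exp_eq_tsum_div]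

lemma step_eq (m : ℝ) : ∀ j : ℕ, ((j+1 : ℕ) : ℝ) * (m ^ (j+1) / (j+1).factorial) = m * (m ^ j / j.factorial) := by
  intro j
  rw [Nat.factorial_succ, pow_succ]
  push_cast
  have h1 : (j.factorial : ℝ) ≠ 0 := Nat.cast_ne_zero.mpr j.factorial_ne_zero
  have h2 : ((j : ℝ) + 1) ≠ 0 := by positivity
  field_simp

lemma summable_k (m : ℝ) : Summable (fun k : ℕ => (k : ℝ) * (m ^ k / k.factorial)) := by
  rw [← summable_nat_add_iff 1]
  exact Summable.congr ((Real.summable_pow_div_factorial m).mul_left m)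
    (fun j => (step_eq m j).symm)

lemma sum_k_exp (m : ℝ) : ∑' k : ℕ, (k : ℝ) * (m ^ k / k.factorial) = m * Real.exp m := by
  rw [Summable.tsum_eq_zero_add (summable_k m)]
  simp only [Nat.cast_zero, zero_mul, zero_add]
  rw [tsum_congr (fun j => step_eq m j), tsum_mul_left, sum_exp]

lemma real_sum (m : ℝ) :
    ∑' k : ℕ, (1 + (k : ℝ)) * (Real.exp (-m) * m ^ k / (Nat.factorial k)) = 1 + m := by
  have hcong : ∀ k : ℕ, (1 + (k : ℝ)) * (Real.exp (-m) * m ^ k / (Nat.factorial k)) =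
      Real.exp (-m) * ((m ^ k / k.factorial) + (k : ℝ) * (m ^ k / k.factorial)) := by
    intro k; field_simp
  rw [tsum_congr hcong, tsum_mul_left,
    Summable.tsum_add (Real.summable_pow_div_factorial m) (summable_k m), sum_exp, sum_k_exp]
  rw [mul_add, ← Real.exp_add, mul_comm m (Real.exp m), ← mul_assoc, ← Real.exp_add]
  simp

lemma summable_total (m : ℝ) :
    Summable (fun k : ℕ => (1 + (k : ℝ)) * (Real.exp (-m) * m ^ k / (Nat.factorial k))) := by
  apply Summable.congr (((Real.summable_pow_div_factorial m).add (summable_k m)).mul_left (Real.exp (-m)))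
  intro k; field_simp

lemma aux_sum (m : ℝ) (hm : 0 ≤ m) :
    ∑' k : ℕ, ((1 : ℝ≥0∞) + k) * ENNReal.ofReal (Real.exp (-m) * m ^ k / (Nat.factorial k)) =
      ENNReal.ofReal (1 + m) := by
  have h1 : ∀ k : ℕ, ((1 : ℝ≥0∞) + k) * ENNReal.ofReal (Real.exp (-m) * m ^ k / (Nat.factorial k)) =
      ENNReal.ofReal ((1 + (k : ℝ)) * (Real.exp (-m) * m ^ k / (Nat.factorial k))) := by
    intro k
    rw [ENNReal.ofReal_mul (by positivity)]
    congr 1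
    rw [ENNReal.ofReal_add zero_le_one (Nat.cast_nonneg k)]
    simp [ENNReal.ofReal_natCast]
  rw [tsum_congr h1, ← ENNReal.ofReal_tsum_of_nonneg (fun k => by positivity) (summable_total m),
    real_sum]

open MeasureTheory ProbabilityTheory Real Set
open scoped ENNReal

lemma interval_calc (g : ℝ) :
    ∫ x in (0:ℝ)..g, Real.exp (-x) * (1 + g - x) = g := by
  have hder : ∀ x ∈ Set.uIcc (0:ℝ) g, HasDerivAt (fun y => Real.exp (-y) * (y - g))
      (Real.exp (-x) * (1 + g - x)) x := by
    intro x _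
    have h1 : HasDerivAt (fun y : ℝ => Real.exp (-y)) (-Real.exp (-x)) x := by
      convert (hasDerivAt_neg x).exp using 1; ring
    have h2 := h1.mul ((hasDerivAt_id x).sub_const g)
    convert (show HasDerivAt (fun y => Real.exp (-y) * (y - g)) (-Real.exp (-x) * (x - g) + Real.exp (-x) * 1) x from h2) using 1
    ring
  rw [intervalIntegral.integral_eq_sub_of_hasDerivAt hder
    (Continuous.intervalIntegrable (by continuity) 0 g)]
  simp

lemma aux_inner (g : ℝ) :
    ∫⁻ e, exponentialPDF 1 e *
      ({q : ℝ × ℝ | q.2 < q.1}.indicator (fun q => ENNReal.ofReal (1 + (q.1 - q.2))) (g, e)) =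
      ENNReal.ofReal (max g 0) := by
  rcases le_or_gt g 0 with hg | hg
  · rw [max_eq_right hg]
    simp only [ENNReal.ofReal_zero]
    rw [← lintegral_zero (μ := (volume : Measure ℝ))]
    apply lintegral_congr
    intro e
    rcases lt_or_ge e 0 with he | he
    · rw [exponentialPDF_of_neg he, zero_mul]
    · rw [Set.indicator_of_notMem (by simp only [Set.mem_setOf_eq]; push_neg; exact le_trans hg he), mul_zero]
  · have key : ∀ e, exponentialPDF 1 e *
        ({q : ℝ × ℝ | q.2 < q.1}.indicator (fun q => ENNReal.ofReal (1 + (q.1 - q.2))) (g, e)) =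
        (Set.Ico (0:ℝ) g).indicator (fun e => ENNReal.ofReal (Real.exp (-e) * (1 + g - e))) e := by
      intro e
      rcases lt_or_ge e 0 with he | he
      · rw [exponentialPDF_of_neg he, zero_mul,
          Set.indicator_of_notMem (by simp [Set.mem_Ico, not_le.mpr he])]
      rcases lt_or_ge e g with heg | heg
      · rw [Set.indicator_of_mem (by simp only [Set.mem_setOf_eq]; exact heg),
          Set.indicator_of_mem (Set.mem_Ico.mpr ⟨he, heg⟩),
          exponentialPDF_of_nonneg he, ← ENNReal.ofReal_mul (by positivity)]
        ring_nf
      · rw [Set.indicator_of_notMem (by simp only [Set.mem_setOf_eq]; exact not_lt.mpr heg), mul_zero,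
          Set.indicator_of_notMem (by simp [Set.mem_Ico, not_lt.mpr heg])]
    rw [lintegral_congr key, lintegral_indicator measurableSet_Ico,
      ← ofReal_integral_eq_lintegral_ofReal]
    · rw [show (∫ e in Set.Ico (0:ℝ) g, Real.exp (-e) * (1 + g - e)) =
          ∫ e in (0:ℝ)..g, Real.exp (-e) * (1 + g - e) by
        rw [intervalIntegral.integral_of_le hg.le, integral_Ico_eq_integral_Ioo,
          integral_Ioc_eq_integral_Ioo]]
      rw [interval_calc, max_eq_left hg.le]
    · exact (Continuous.integrableOn_Icc (by continuity)).mono_set Set.Ico_subset_Icc_self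
    · refine (ae_restrict_iff' measurableSet_Ico).mpr (ae_of_all _ ?_)
      intro e he
      have h1 : (0:ℝ) < 1 + g - e := by linarith [he.2]
      have h2 := Real.exp_pos (-e)
      simp only [Pi.zero_apply]
      positivity

open MeasureTheory ProbabilityTheory Real Set
open scoped ENNReal

lemma aux_outer (α : ℝ) (hα : 0 < α) :
    ∫⁻ g, gammaPDF α 1 g * ENNReal.ofReal (max g 0) = ENNReal.ofReal α := by
  have hΓ : 0 < Real.Gamma α := Real.Gamma_pos_of_pos hα
  have key : ∀ g, gammaPDF α 1 g * ENNReal.ofReal (max g 0) =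
      (Set.Ioi (0:ℝ)).indicator (fun g => ENNReal.ofReal ((Real.Gamma α)⁻¹ * (Real.exp (-g) * g ^ α))) g := by
    intro g
    rcases le_or_gt g 0 with hg | hg
    · rw [Set.indicator_of_notMem (by simpa using hg), max_eq_right hg]
      simp
    · rw [Set.indicator_of_mem (Set.mem_Ioi.mpr hg), gammaPDF_of_nonneg hg.le, max_eq_left hg.le,
        ← ENNReal.ofReal_mul (by positivity)]
      congr 1
      rw [one_rpow]
      rw [show g ^ α = g ^ (α - 1) * g by
        rw [show α = α - 1 + 1 by ring, Real.rpow_add hg, Real.rpow_one]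
        ring_nf]
      field_simp
  rw [lintegral_congr key, lintegral_indicator measurableSet_Ioi,
    ← ofReal_integral_eq_lintegral_ofReal]
  · rw [integral_const_mul]
    have : ∫ g in Set.Ioi (0:ℝ), Real.exp (-g) * g ^ α = Real.Gamma (α + 1) := by
      rw [Real.Gamma_eq_integral (by linarith)]
      norm_num
    rw [this, Real.Gamma_add_one (ne_of_gt hα)]
    congr 1
    field_simp
  · apply Integrable.const_mul
    have := Real.GammaIntegral_convergent (s := α + 1) (by linarith)
    simpa using this.integrable
  · refine (ae_restrict_iff' measurableSet_Ioi).mpr (ae_of_all _ ?_)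
    intro g hg
    simp only [Pi.zero_apply]
    have : (0:ℝ) < g := hg
    positivity





/-- Let `E ~ Exp(1)` and `G ~ Gamma(α,1)` be independent with `α > 0`, and let
`Z = (1 + N)·1_{G > E}` where, conditionally on `(G, E)`, `N` is Poisson with
mean `(G − E)⁺`. Then `E[Z] = α`. The conditional Poisson property is expressed
via the joint law of `N` and `(G, E)`. -/
theorem conversion_expected_white {Ω : Type*} [MeasurableSpace Ω]
    (μ : Measure Ω) [IsProbabilityMeasure μ] (α : ℝ) (hα : 0 < α)
    (G E : Ω → ℝ) (hG : Measurable G) (hE : Measurable E)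
    (hGlaw : μ.map G = gammaMeasure α 1) (hElaw : μ.map E = expMeasure 1)
    (hIndGE : IndepFun G E μ)
    (N : Ω → ℕ) (hN : Measurable N)
    (hcond : ∀ (k : ℕ) (s : Set (ℝ × ℝ)), MeasurableSet s →
      μ {ω | N ω = k ∧ (G ω, E ω) ∈ s} =
        ∫⁻ ω in (fun ω => (G ω, E ω)) ⁻¹' s,
          ENNReal.ofReal (Real.exp (-(max (G ω - E ω) 0)) *
            (max (G ω - E ω) 0) ^ k / (Nat.factorial k)) ∂μ) :
    ∫ ω, Set.indicator {ω | E ω < G ω} (fun ω => 1 + (N ω : ℝ)) ω ∂μ = α := by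
  haveI : IsProbabilityMeasure (expMeasure 1) := isProbabilityMeasure_expMeasure one_pos
  set S : Set Ω := {ω | E ω < G ω} with hSdef
  have hS : MeasurableSet S := measurableSet_lt hE hG
  set M : Ω → ℝ := fun ω => max (G ω - E ω) 0 with hMdef
  have hM : Measurable M := (hG.sub hE).max measurable_const
  have hsetm : MeasurableSet {q : ℝ × ℝ | q.2 < q.1} := measurableSet_lt measurable_snd measurable_fst
  set Φ : ℝ × ℝ → ℝ≥0∞ :=
    fun p => Set.indicator {q : ℝ × ℝ | q.2 < q.1} (fun q => ENNReal.ofReal (1 + (q.1 - q.2))) p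
    with hΦdef
  have hΦ : Measurable Φ := by
    apply Measurable.indicator _ hsetm
    fun_prop
  have hTk : ∀ k : ℕ, MeasurableSet {ω | N ω = k} := fun k => hN (measurableSet_singleton k)
  rw [integral_eq_lintegral_of_nonneg_ae
    (ae_of_all _ (fun ω => Set.indicator_nonneg (fun ω _ => by positivity) ω))
    ((Measurable.indicator (by fun_prop) hS).aestronglyMeasurable)]
  have key : ∫⁻ ω, ENNReal.ofReal (S.indicator (fun ω => 1 + (N ω : ℝ)) ω) ∂μ
      = ENNReal.ofReal α := by
    have e1 : ∀ ω, ENNReal.ofReal (S.indicator (fun ω => 1 + (N ω : ℝ)) ω) =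
        ∑' k : ℕ, Set.indicator ({ω' | N ω' = k} ∩ S)
          (fun _ => 1 + (k : ℝ≥0∞)) ω := by
      intro ω
      rw [tsum_eq_single (N ω) ?_]
      · by_cases h : ω ∈ S
        · rw [Set.indicator_of_mem h, Set.indicator_of_mem (show ω ∈ ({ω' | N ω' = N ω} ∩ S) from ⟨rfl, h⟩),
            ENNReal.ofReal_add zero_le_one (Nat.cast_nonneg _), ENNReal.ofReal_one,
            ENNReal.ofReal_natCast]
        · rw [Set.indicator_of_notMem h, Set.indicator_of_notMem (fun hc => h hc.2),
            ENNReal.ofReal_zero]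
      · intro k hk
        exact Set.indicator_of_notMem (fun h => hk (Eq.symm h.1)) _
    rw [lintegral_congr e1, lintegral_tsum (fun k =>
      (measurable_const.indicator ((hTk k).inter hS)).aemeasurable)]
    have e2 : ∀ k : ℕ, (∫⁻ ω, Set.indicator ({ω' | N ω' = k} ∩ S)
        (fun _ => 1 + (k : ℝ≥0∞)) ω ∂μ)
        = (1 + (k : ℝ≥0∞)) * μ {ω | N ω = k ∧ (G ω, E ω) ∈ {q : ℝ × ℝ | q.2 < q.1}} := by
      intro k
      rw [lintegral_indicator ((hTk k).inter hS), setLIntegral_const]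
      rfl
    rw [tsum_congr e2]
    have e3 : ∀ k : ℕ, (1 + (k : ℝ≥0∞)) *
        μ {ω | N ω = k ∧ (G ω, E ω) ∈ {q : ℝ × ℝ | q.2 < q.1}}
        = ∫⁻ ω in S, (1 + (k : ℝ≥0∞)) *
          ENNReal.ofReal (Real.exp (-(M ω)) * (M ω) ^ k / (Nat.factorial k)) ∂μ := by
      intro k
      rw [hcond k _ hsetm, ← lintegral_const_mul _ (by fun_prop)]
      rfl
    have hmk : ∀ k : ℕ, Measurable (fun ω => (1 + (k : ℝ≥0∞)) *
        ENNReal.ofReal (Real.exp (-(M ω)) * (M ω) ^ k / (Nat.factorial k))) := fun k => by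
      fun_prop
    rw [tsum_congr e3, ← lintegral_tsum (fun k => (hmk k).aemeasurable)]
    have e4 : ∀ ω, (∑' k : ℕ, (1 + (k : ℝ≥0∞)) *
        ENNReal.ofReal (Real.exp (-(M ω)) * (M ω) ^ k / (Nat.factorial k)))
        = ENNReal.ofReal (1 + M ω) := fun ω => aux_sum (M ω) (le_max_right _ _)
    rw [lintegral_congr e4]
    have e5 : ∀ ω, S.indicator (fun ω => ENNReal.ofReal (1 + M ω)) ω = Φ (G ω, E ω) := by
      intro ω
      show _ = Set.indicator {q : ℝ × ℝ | q.2 < q.1}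
        (fun q => ENNReal.ofReal (1 + (q.1 - q.2))) (G ω, E ω)
      by_cases h : ω ∈ S
      · have hlt : E ω < G ω := h
        rw [Set.indicator_of_mem h,
          Set.indicator_of_mem (show (G ω, E ω) ∈ {q : ℝ × ℝ | q.2 < q.1} from hlt)]
        simp only [hMdef]
        rw [max_eq_left (by linarith)]
      · have hlt : ¬ (E ω < G ω) := h
        rw [Set.indicator_of_notMem h,
          Set.indicator_of_notMem (show (G ω, E ω) ∉ {q : ℝ × ℝ | q.2 < q.1} from hlt)]
    have hmap : μ.map (fun ω => (G ω, E ω)) = (gammaMeasure α 1).prod (expMeasure 1) := by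
      rw [← hGlaw, ← hElaw]
      exact (indepFun_iff_map_prod_eq_prod_map_map hG.aemeasurable hE.aemeasurable).mp hIndGE
    rw [← lintegral_indicator hS, lintegral_congr e5,
      ← lintegral_map hΦ (hG.prodMk hE), hmap, lintegral_prod _ hΦ.aemeasurable]
    have hpdfmeas : ∀ a r : ℝ, Measurable (gammaPDF a r) :=
      fun a r => (measurable_gammaPDFReal a r).ennreal_ofReal
    have inner : ∀ g : ℝ, ∫⁻ e, Φ (g, e) ∂(expMeasure 1) = ENNReal.ofReal (max g 0) := by
      intro g
      rw [expMeasure, gammaMeasure, lintegral_withDensity_eq_lintegral_mul _ (hpdfmeas 1 1)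
        (show Measurable (fun e => Φ (g, e)) from hΦ.comp measurable_prodMk_left)]
      exact aux_inner g
    rw [lintegral_congr inner, gammaMeasure, lintegral_withDensity_eq_lintegral_mul _
      (hpdfmeas α 1) (by fun_prop)]
    exact aux_outer α hα
  rw [key, ENNReal.toReal_ofReal hα.le]
end
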